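/- Nonnegativity is invariant in the surveillance-triggered behavioral-epidemiological model: if U(0), A(0), C(0), Q(0), I(0), R(0) are all nonnegative, then U(t), A(t), C(t), Q(t), I(t), R(t) are all nonnegative for every t ≥ 0. -/

import Mathlib

lemma nonneg_of_deriv_ge (T K : ℝ) (f f' : ℝ → ℝ)
    (hf : ∀ t ∈ Set.Icc (0:ℝ) T, HasDerivAt f (f' t) t)
    (h0 : 0 ≤ f 0)
    (hK : ∀ t ∈ Set.Icc (0:ℝ) T, f t ≤ 0 → K * f t ≤ f' t) :
    ∀ t ∈ Set.Icc (0:ℝ) T, 0 ≤ f t := by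
  set g : ℝ → ℝ := fun t => f t * Real.exp (-K * t) with hgdef
  have hg : ∀ t ∈ Set.Icc (0:ℝ) T,
      HasDerivAt g ((f' t - K * f t) * Real.exp (-K * t)) t := by
    intro t ht
    have h1 : HasDerivAt (fun t : ℝ => Real.exp (-K * t)) (Real.exp (-K * t) * (-K)) t := by
      have := ((hasDerivAt_id t).const_mul (-K)).exp
      simpa using this
    have : HasDerivAt g (f' t * Real.exp (-K * t) + f t * (Real.exp (-K * t) * -K)) t :=
      (hf t ht).mul h1
    convert this using 1
    ring
  have hgcont : ∀ t ∈ Set.Icc (0:ℝ) T, ContinuousAt g t := fun t ht => (hg t ht).continuousAt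
  have key : ∀ t ∈ Set.Icc (0:ℝ) T, 0 ≤ g t := by
    by_contra hcon
    push_neg at hcon
    obtain ⟨t1, ht1, hgt1⟩ := hcon
    set S : Set ℝ := {t | t ∈ Set.Icc (0:ℝ) t1 ∧ 0 ≤ g t} with hSdef
    have hg0 : 0 ≤ g 0 := by simpa [hgdef] using h0
    have h0S : (0:ℝ) ∈ S := ⟨⟨le_refl 0, ht1.1⟩, hg0⟩
    have hSne : S.Nonempty := ⟨0, h0S⟩
    have hSbdd : BddAbove S := ⟨t1, fun x hx => hx.1.2⟩
    set s := sSup S with hsdef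
    have hs0 : 0 ≤ s := le_csSup hSbdd h0S
    have hst1 : s ≤ t1 := csSup_le hSne fun x hx => hx.1.2
    have hsIcc : s ∈ Set.Icc (0:ℝ) T := ⟨hs0, hst1.trans ht1.2⟩
    -- 0 ≤ g s
    have hscl : s ∈ closure S := csSup_mem_closure hSne hSbdd
    have hcw : ContinuousWithinAt g S s := (hgcont s hsIcc).continuousWithinAt
    have hne : (nhdsWithin s S).NeBot := mem_closure_iff_nhdsWithin_neBot.mp hscl
    haveI := hne
    have hgs : 0 ≤ g s := by
      refine ge_of_tendsto hcw ?_
      filter_upwards [self_mem_nhdsWithin] with x hx using hx.2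
    have hslt : s < t1 := by
      rcases lt_or_eq_of_le hst1 with h | h
      · exact h
      · exact absurd (h ▸ hgs) (not_le.mpr hgt1)
    have hneg : ∀ t, s < t → t ≤ t1 → g t < 0 := by
      intro t hst htt1
      by_contra hge
      push_neg at hge
      have : t ∈ S := ⟨⟨hs0.trans hst.le, htt1⟩, hge⟩
      exact absurd (le_csSup hSbdd this) (not_le.mpr hst)
    -- g s ≤ 0
    have hgs' : g s ≤ 0 := by
      have hcw2 : ContinuousWithinAt g (Set.Ioi s) s := (hgcont s hsIcc).continuousWithinAt
      refine le_of_tendsto hcw2 ?_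
      filter_upwards [Ioc_mem_nhdsGT hslt] with x hx
      exact (hneg x hx.1 hx.2).le
    have hgseq : g s = 0 := le_antisymm hgs' hgs
    -- g ≤ 0 on [s, t1]
    have hle : ∀ t ∈ Set.Icc s t1, g t ≤ 0 := by
      intro t ht
      rcases eq_or_lt_of_le ht.1 with h | h
      · rw [← h]; exact hgs'
      · exact (hneg t h ht.2).le
    have hsub : Set.Icc s t1 ⊆ Set.Icc (0:ℝ) T :=
      Set.Icc_subset_Icc hs0 ht1.2
    have hmono : MonotoneOn g (Set.Icc s t1) := by
      apply monotoneOn_of_deriv_nonneg (convex_Icc s t1)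
      · exact fun x hx => ((hgcont x (hsub hx)).continuousWithinAt)
      · intro x hx
        rw [interior_Icc] at hx
        exact ((hg x (hsub (Set.Ioo_subset_Icc_self hx))).differentiableAt).differentiableWithinAt
      · intro x hx
        rw [interior_Icc] at hx
        have hxIcc : x ∈ Set.Icc (0:ℝ) T := hsub (Set.Ioo_subset_Icc_self hx)
        rw [(hg x hxIcc).deriv]
        have hfx : f x ≤ 0 := by
          have hgx := hle x (Set.Ioo_subset_Icc_self hx)
          simp only [hgdef] at hgx
          by_contra hpos
          push_neg at hpos
          nlinarith [Real.exp_pos (-K * x)]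
        have := hK x hxIcc hfx
        have := Real.exp_pos (-K * x)
        nlinarith
    have : g s ≤ g t1 := hmono (Set.left_mem_Icc.mpr hslt.le) (Set.right_mem_Icc.mpr hslt.le) hslt.le
    rw [hgseq] at this
    exact absurd this (not_le.mpr hgt1)
  intro t ht
  have hkey := key t ht
  simp only [hgdef] at hkey
  have he := Real.exp_pos (-K * t)
  by_contra hneg
  push_neg at hneg
  exact absurd hkey (not_le.mpr (mul_neg_of_neg_of_pos hneg he))

lemma lin_nonneg (T : ℝ) (f a r : ℝ → ℝ)
    (hf : ∀ t ∈ Set.Icc (0:ℝ) T, HasDerivAt f (a t * f t + r t) t)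
    (ha : ContinuousOn a (Set.Icc (0:ℝ) T))
    (hr : ∀ t ∈ Set.Icc (0:ℝ) T, 0 ≤ r t)
    (h0 : 0 ≤ f 0) : ∀ t ∈ Set.Icc (0:ℝ) T, 0 ≤ f t := by
  obtain ⟨M, hM⟩ := isCompact_Icc.exists_bound_of_continuousOn ha
  refine nonneg_of_deriv_ge T M f (fun t => a t * f t + r t) hf h0 ?_
  intro t ht hft
  show M * f t ≤ a t * f t + r t
  have h1 := hM t ht
  rw [Real.norm_eq_abs] at h1
  obtain ⟨h2, h3⟩ := abs_le.mp h1
  have := hr t ht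
  nlinarith


/-- The surveillance-triggered behavioral-epidemiological model:
`U' = −β_i U A/N − β U I/N`, `A' = β_i U A/N − (1−ε) β A I/N − γ_i A`,
`C' = γ_i A − β C I/N`, `Q' = φ β [U + C + (1−ε)A] I/N − γ Q`,
`I' = (1−φ) β [U + C + (1−ε)A] I/N − γ I`, `R' = γ(Q + I)` on `[0,∞)`. -/
def SurveillanceModel (N β γ βi γi ε φ : ℝ) (U A C Q I R : ℝ → ℝ) : Prop :=
  ∀ t : ℝ, 0 ≤ t →
    HasDerivAt U (-βi * U t * A t / N - β * U t * I t / N) t ∧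
    HasDerivAt A (βi * U t * A t / N - (1 - ε) * β * A t * I t / N - γi * A t) t ∧
    HasDerivAt C (γi * A t - β * C t * I t / N) t ∧
    HasDerivAt Q (φ * β * (U t + C t + (1 - ε) * A t) * I t / N - γ * Q t) t ∧
    HasDerivAt I ((1 - φ) * β * (U t + C t + (1 - ε) * A t) * I t / N - γ * I t) t ∧
    HasDerivAt R (γ * (Q t + I t)) t

/-- Nonnegativity is invariant in the surveillance-triggered
behavioral-epidemiological model: if `U 0, A 0, C 0, Q 0, I 0, R 0` are all nonnegative,
then `U t, A t, C t, Q t, I t, R t` are all nonnegative for every `t ≥ 0`. -/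
theorem surveillance_model_nonneg_invariant
    (N β γ βi γi ε φ : ℝ) (U A C Q I R : ℝ → ℝ)
    (hN : 0 < N) (hβ : 0 < β) (hγ : 0 < γ) (hβi : 0 < βi) (hγi : 0 < γi)
    (hε : ε ∈ Set.Icc (0:ℝ) 1) (hφ : φ ∈ Set.Icc (0:ℝ) 1)
    (hmodel : SurveillanceModel N β γ βi γi ε φ U A C Q I R)
    (hU0 : 0 ≤ U 0) (hA0 : 0 ≤ A 0) (hC0 : 0 ≤ C 0)
    (hQ0 : 0 ≤ Q 0) (hI0 : 0 ≤ I 0) (hR0 : 0 ≤ R 0) :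
    ∀ t : ℝ, 0 ≤ t →
      0 ≤ U t ∧ 0 ≤ A t ∧ 0 ≤ C t ∧ 0 ≤ Q t ∧ 0 ≤ I t ∧ 0 ≤ R t := by
  intro T hT
  have hTm : T ∈ Set.Icc (0:ℝ) T := ⟨hT, le_refl T⟩
  have hm : ∀ t ∈ Set.Icc (0:ℝ) T,
      HasDerivAt U (-βi * U t * A t / N - β * U t * I t / N) t ∧
      HasDerivAt A (βi * U t * A t / N - (1 - ε) * β * A t * I t / N - γi * A t) t ∧
      HasDerivAt C (γi * A t - β * C t * I t / N) t ∧
      HasDerivAt Q (φ * β * (U t + C t + (1 - ε) * A t) * I t / N - γ * Q t) t ∧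
      HasDerivAt I ((1 - φ) * β * (U t + C t + (1 - ε) * A t) * I t / N - γ * I t) t ∧
      HasDerivAt R (γ * (Q t + I t)) t := fun t ht => hmodel t ht.1
  have hUc : ContinuousOn U (Set.Icc (0:ℝ) T) :=
    fun x hx => ((hm x hx).1.continuousAt).continuousWithinAt
  have hAc : ContinuousOn A (Set.Icc (0:ℝ) T) :=
    fun x hx => ((hm x hx).2.1.continuousAt).continuousWithinAt
  have hCc : ContinuousOn C (Set.Icc (0:ℝ) T) :=
    fun x hx => ((hm x hx).2.2.1.continuousAt).continuousWithinAt
  have hIc : ContinuousOn I (Set.Icc (0:ℝ) T) :=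
    fun x hx => ((hm x hx).2.2.2.2.1.continuousAt).continuousWithinAt
  -- U
  have hU : ∀ t ∈ Set.Icc (0:ℝ) T, 0 ≤ U t := by
    refine lin_nonneg T U (fun s => (-βi * A s - β * I s) / N) (fun _ => 0) ?_ ?_ ?_ hU0
    · intro t ht
      have h := (hm t ht).1
      have he : (-βi * A t - β * I t) / N * U t + 0
          = -βi * U t * A t / N - β * U t * I t / N := by ring
      rw [he]; exact h
    · exact ((continuousOn_const.mul hAc).sub (continuousOn_const.mul hIc)).div_const N
    · intro t _; exact le_refl 0
  -- A
  have hA : ∀ t ∈ Set.Icc (0:ℝ) T, 0 ≤ A t := by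
    refine lin_nonneg T A (fun s => (βi * U s - (1 - ε) * β * I s) / N - γi) (fun _ => 0)
      ?_ ?_ ?_ hA0
    · intro t ht
      have h := (hm t ht).2.1
      have he : ((βi * U t - (1 - ε) * β * I t) / N - γi) * A t + 0
          = βi * U t * A t / N - (1 - ε) * β * A t * I t / N - γi * A t := by ring
      rw [he]; exact h
    · exact (((continuousOn_const.mul hUc).sub (continuousOn_const.mul hIc)).div_const N).sub
        continuousOn_const
    · intro t _; exact le_refl 0
  -- I
  have hI : ∀ t ∈ Set.Icc (0:ℝ) T, 0 ≤ I t := by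
    refine lin_nonneg T I (fun s => (1 - φ) * β * (U s + C s + (1 - ε) * A s) / N - γ)
      (fun _ => 0) ?_ ?_ ?_ hI0
    · intro t ht
      have h := (hm t ht).2.2.2.2.1
      have he : ((1 - φ) * β * (U t + C t + (1 - ε) * A t) / N - γ) * I t + 0
          = (1 - φ) * β * (U t + C t + (1 - ε) * A t) * I t / N - γ * I t := by ring
      rw [he]; exact h
    · exact ((continuousOn_const.mul ((hUc.add hCc).add (continuousOn_const.mul hAc))).div_const
        N).sub continuousOn_const
    · intro t _; exact le_refl 0
  -- C
  have hC : ∀ t ∈ Set.Icc (0:ℝ) T, 0 ≤ C t := by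
    refine lin_nonneg T C (fun s => -(β * I s) / N) (fun s => γi * A s) ?_ ?_ ?_ hC0
    · intro t ht
      have h := (hm t ht).2.2.1
      have he : -(β * I t) / N * C t + γi * A t = γi * A t - β * C t * I t / N := by ring
      rw [he]; exact h
    · exact ((continuousOn_const.mul hIc).neg.div_const N)
    · intro t ht; exact mul_nonneg hγi.le (hA t ht)
  -- Q
  have hQ : ∀ t ∈ Set.Icc (0:ℝ) T, 0 ≤ Q t := by
    refine lin_nonneg T Q (fun _ => -γ)
      (fun s => φ * β * (U s + C s + (1 - ε) * A s) * I s / N) ?_ ?_ ?_ hQ0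
    · intro t ht
      have h := (hm t ht).2.2.2.1
      have he : -γ * Q t + φ * β * (U t + C t + (1 - ε) * A t) * I t / N
          = φ * β * (U t + C t + (1 - ε) * A t) * I t / N - γ * Q t := by ring
      rw [he]; exact h
    · exact continuousOn_const
    · intro t ht
      apply div_nonneg _ hN.le
      apply mul_nonneg _ (hI t ht)
      apply mul_nonneg (mul_nonneg hφ.1 hβ.le)
      have h1 : 0 ≤ (1 - ε) * A t := mul_nonneg (by linarith [hε.2]) (hA t ht)
      linarith [hU t ht, hC t ht]
  -- R
  have hR : ∀ t ∈ Set.Icc (0:ℝ) T, 0 ≤ R t := by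
    refine lin_nonneg T R (fun _ => 0) (fun s => γ * (Q s + I s)) ?_ ?_ ?_ hR0
    · intro t ht
      have h := (hm t ht).2.2.2.2.2
      have he : (0:ℝ) * R t + γ * (Q t + I t) = γ * (Q t + I t) := by ring
      rw [he]; exact h
    · exact continuousOn_const
    · intro t ht
      exact mul_nonneg hγ.le (by linarith [hQ t ht, hI t ht])
  exact ⟨hU T hTm, hA T hTm, hC T hTm, hQ T hTm, hI T hTm, hR T hTm⟩
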